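/- arXiv:2512.15785 — 6 statements merged into one kernel-verified Lean document; each statement's English description precedes it below -/
import Mathlib

section
/- Let E ∈ (0,1), r ∈ ℕ, p : ℝ → ℝ, s⁰ : ℕ → ℝ, and let (s_t, x_t) solve the delayed chemostat system s_{t+1} = E s⁰_t + (1-E)(s_t - x_t p(s_t)), x_{t+1} = (1-E) x_t + x_{t-r} p(s_{t-r}) (1-E)^{r+1}. Define y_{t+1} := ∑_{k=0}^{r-1} x_{t-k} p(s_{t-k}) (1-E)^{k+1}, and let z satisfy z_{t+1} = (1-E) z_t + E s⁰_t. Then for all t ≥ 0, s_{t+1} + x_{t+1} + y_{t+1} - z_{t+1} = (1-E)^{t+1} (s_0 + x_0 + y_0 - z_0). -/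
/-- Conservation law for the delayed discrete chemostat:
`s_{t+1} + x_{t+1} + y_{t+1} - z_{t+1} = (1-E)^{t+1} (s_0 + x_0 + y_0 - z_0)`. -/
theorem stmt3 (E : ℝ) (hE0 : 0 < E) (hE1 : E < 1) (r : ℕ)
    (p : ℝ → ℝ) (s0 s x y z : ℤ → ℝ)
    (hs : ∀ t : ℤ, 0 ≤ t →
      s (t + 1) = E * s0 t + (1 - E) * (s t - x t * p (s t)))
    (hx : ∀ t : ℤ, 0 ≤ t →
      x (t + 1) = (1 - E) * x t + x (t - r) * p (s (t - r)) * (1 - E) ^ (r + 1))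
    (hy : ∀ t : ℤ, -1 ≤ t →
      y (t + 1) = ∑ k ∈ Finset.range r, x (t - k) * p (s (t - k)) * (1 - E) ^ (k + 1))
    (hz : ∀ t : ℤ, 0 ≤ t → z (t + 1) = (1 - E) * z t + E * s0 t) :
    ∀ t : ℤ, 0 ≤ t →
      s (t + 1) + x (t + 1) + y (t + 1) - z (t + 1) =
        (1 - E) ^ ((t + 1).toNat) * (s 0 + x 0 + y 0 - z 0) := by
  -- y-shift lemma
  have hyshift : ∀ t : ℤ, 0 ≤ t →
      y (t + 1) = (1 - E) * y t + x t * p (s t) * (1 - E)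
        - x (t - r) * p (s (t - r)) * (1 - E) ^ (r + 1) := by
    intro t ht
    set f : ℕ → ℝ := fun k => x (t - k) * p (s (t - k)) * (1 - E) ^ (k + 1) with hf
    have h1 : y (t + 1) = ∑ k ∈ Finset.range r, f k := hy t (by linarith)
    have h0 : y ((t - 1) + 1) = ∑ k ∈ Finset.range r,
        x ((t - 1) - k) * p (s ((t - 1) - k)) * (1 - E) ^ (k + 1) :=
      hy (t - 1) (by linarith)
    have hyt : y t = ∑ k ∈ Finset.range r,
        x (t - 1 - k) * p (s (t - 1 - k)) * (1 - E) ^ (k + 1) := by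
      rwa [show (t - 1 + 1 : ℤ) = t by ring] at h0
    have h2 : (1 - E) * y t = ∑ k ∈ Finset.range r, f (k + 1) := by
      rw [hyt, Finset.mul_sum]
      refine Finset.sum_congr rfl fun k _ => ?_
      simp only [hf]
      have heq : t - ((k : ℤ) + 1) = t - 1 - k := by ring
      push_cast
      rw [heq]
      ring
    have h3 : ∑ k ∈ Finset.range r, f (k + 1) = (∑ k ∈ Finset.range r, f k) + f r - f 0 := by
      have := Finset.sum_range_succ' f r
      have h4 := Finset.sum_range_succ f r
      rw [h4] at this
      linarith
    have hf0 : f 0 = x t * p (s t) * (1 - E) := by simp [hf]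
    have hfr : f r = x (t - r) * p (s (t - r)) * (1 - E) ^ (r + 1) := rfl
    rw [h1, h2, h3, hf0, hfr]
    ring
  -- conservation step
  have hstep : ∀ t : ℤ, 0 ≤ t →
      s (t + 1) + x (t + 1) + y (t + 1) - z (t + 1) =
        (1 - E) * (s t + x t + y t - z t) := by
    intro t ht
    rw [hs t ht, hx t ht, hyshift t ht, hz t ht]
    ring
  intro t
  refine Int.le_induction (m := 0)
    (motive := fun t _ => s (t + 1) + x (t + 1) + y (t + 1) - z (t + 1) =
      (1 - E) ^ ((t + 1).toNat) * (s 0 + x 0 + y 0 - z 0)) ?_ ?_ t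
  · have := hstep 0 le_rfl
    norm_num at this ⊢
    exact this
  · intro n hn ih
    have h := hstep (n + 1) (by linarith)
    rw [h, ih]
    have hnt : ((n + 1 + 1 : ℤ)).toNat = (n + 1).toNat + 1 := by omega
    rw [hnt, pow_succ]
    ring
end

section
/- Under the conservation law of the delayed discrete chemostat: if s_0 + x_0 + y_0 ≤ z_0, then s_t + x_t + y_t ≤ z_t for all t ≥ 0. -/
/-- Under the conservation law of the delayed discrete chemostat:
if `s_0 + x_0 + y_0 ≤ z_0`, then `s_t + x_t + y_t ≤ z_t` for all `t ≥ 0`. -/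
theorem stmt4 (E : ℝ) (hE0 : 0 < E) (hE1 : E < 1) (r : ℕ)
    (p : ℝ → ℝ) (s0 s x y z : ℤ → ℝ)
    (hs : ∀ t : ℤ, 0 ≤ t →
      s (t + 1) = E * s0 t + (1 - E) * (s t - x t * p (s t)))
    (hx : ∀ t : ℤ, 0 ≤ t →
      x (t + 1) = (1 - E) * x t + x (t - r) * p (s (t - r)) * (1 - E) ^ (r + 1))
    (hy : ∀ t : ℤ, -1 ≤ t →
      y (t + 1) = ∑ k ∈ Finset.range r, x (t - k) * p (s (t - k)) * (1 - E) ^ (k + 1))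
    (hz : ∀ t : ℤ, 0 ≤ t → z (t + 1) = (1 - E) * z t + E * s0 t)
    (hinit : s 0 + x 0 + y 0 ≤ z 0) :
    ∀ t : ℤ, 0 ≤ t → s t + x t + y t ≤ z t := by
  intro t ht
  refine Int.le_induction (motive := fun n _ => s n + x n + y n ≤ z n) hinit (fun t ht ih => ?_) t ht
  have h1E : (0:ℝ) < 1 - E := by linarith
  have hst := hs t ht
  have hxt := hx t ht
  have hyt1 := hy t (by linarith)
  have hzt := hz t ht
  set g : ℕ → ℝ := fun k => x (t - k) * p (s (t - k)) * (1 - E) ^ (k + 1) with hg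
  have hyt : (1 - E) * y t = ∑ k ∈ Finset.range r, g (k + 1) := by
    have h := hy (t - 1) (by linarith)
    rw [sub_add_cancel] at h
    rw [h, Finset.mul_sum]
    refine Finset.sum_congr rfl fun k _ => ?_
    have harg : t - 1 - (k : ℤ) = t - ((k : ℕ) + 1 : ℕ) := by push_cast; ring
    simp only [hg, harg]
    ring
  have key : y (t + 1) - (1 - E) * y t = g 0 - g r := by
    rw [hyt1, hyt, ← Finset.sum_sub_distrib]
    exact Finset.sum_range_sub' g r
  have hg0 : g 0 = x t * p (s t) * (1 - E) := by
    simp [hg]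
  have hgr : g r = x (t - r) * p (s (t - r)) * (1 - E) ^ (r + 1) := rfl
  have hmul : (1 - E) * (s t + x t + y t - z t) ≤ 0 :=
    mul_nonpos_of_nonneg_of_nonpos (le_of_lt h1E) (by linarith [ih])
  nlinarith [hmul]
end

section
/- Let E ∈ (0,1), r ∈ ℕ, and let p : [0,∞) → ℝ be C¹ with p(0) = 0 and 0 < p'(ξ) for all ξ ≥ 0. Suppose z_t p'(ξ) ≤ 1 for all t ≥ 0 and all ξ ≥ 0, where z solves z_{t+1} = (1-E) z_t + E s⁰_t with s⁰_t > 0. If the initial conditions (s_j, x_j) for -r ≤ j ≤ 0 are nonnegative and s_0 + x_0 + y_0 ≤ z_0, then the solution of the delayed chemostat system satisfies x_t ≥ 0 and s_t > 0 for all t > 0. -/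
/-- positivity of the solution of the delayed chemostat system.
If `p` is C¹ on `[0,∞)` with `p(0)=0`, `p' > 0`, `z_t p'(ξ) ≤ 1`, nonnegative
initial data with `s_0 + x_0 + y_0 ≤ z_0`, then `x_t ≥ 0` and `s_t > 0` for `t > 0`. -/
theorem stmt5 (E : ℝ) (hE0 : 0 < E) (hE1 : E < 1) (r : ℕ)
    (p : ℝ → ℝ) (hp : ContDiffOn ℝ 1 p (Set.Ici (0 : ℝ)))
    (hp0 : p 0 = 0)
    (hp' : ∀ ξ : ℝ, 0 ≤ ξ → 0 < derivWithin p (Set.Ici (0 : ℝ)) ξ)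
    (s0 s x y z : ℤ → ℝ)
    (hs0pos : ∀ t : ℤ, 0 < s0 t)
    (hz : ∀ t : ℤ, 0 ≤ t → z (t + 1) = (1 - E) * z t + E * s0 t)
    (hzp : ∀ t : ℤ, 0 ≤ t → ∀ ξ : ℝ, 0 ≤ ξ →
      z t * derivWithin p (Set.Ici (0 : ℝ)) ξ ≤ 1)
    (hs : ∀ t : ℤ, 0 ≤ t →
      s (t + 1) = E * s0 t + (1 - E) * (s t - x t * p (s t)))
    (hx : ∀ t : ℤ, 0 ≤ t →
      x (t + 1) = (1 - E) * x t + x (t - r) * p (s (t - r)) * (1 - E) ^ (r + 1))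
    (hy : ∀ t : ℤ, -1 ≤ t →
      y (t + 1) = ∑ k ∈ Finset.range r, x (t - k) * p (s (t - k)) * (1 - E) ^ (k + 1))
    (hinits : ∀ j : ℤ, -(r : ℤ) ≤ j → j ≤ 0 → 0 ≤ s j)
    (hinitx : ∀ j : ℤ, -(r : ℤ) ≤ j → j ≤ 0 → 0 ≤ x j)
    (hinit : s 0 + x 0 + y 0 ≤ z 0) :
    ∀ t : ℤ, 0 < t → 0 ≤ x t ∧ 0 < s t := by
  have hEp : 0 < 1 - E := by linarith
  -- `p` is strictly monotone on `[0,∞)`, hence nonnegative there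
  have hmono : StrictMonoOn p (Set.Ici (0 : ℝ)) := by
    apply strictMonoOn_of_deriv_pos (convex_Ici 0) hp.continuousOn
    intro ξ hξ
    rw [interior_Ici] at hξ
    have hd : derivWithin p (Set.Ici (0 : ℝ)) ξ = deriv p ξ :=
      derivWithin_of_mem_nhds (Ici_mem_nhds hξ)
    rw [← hd]
    exact hp' ξ (le_of_lt hξ)
  have pnn : ∀ a : ℝ, 0 ≤ a → 0 ≤ p a := by
    intro a ha
    rcases ha.eq_or_lt with h | h
    · rw [← h, hp0]
    · have h2 := hmono Set.self_mem_Ici (Set.mem_Ici.2 h.le) h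
      rw [hp0] at h2
      exact h2.le
  -- key estimate : `X * p a ≤ a` whenever `0 ≤ a`, `0 ≤ X ≤ Z`, `Z * p' ≤ 1`
  have key : ∀ Z X a : ℝ, 0 ≤ a → 0 ≤ X → X ≤ Z →
      (∀ ξ : ℝ, 0 ≤ ξ → Z * derivWithin p (Set.Ici (0 : ℝ)) ξ ≤ 1) →
      X * p a ≤ a := by
    intro Z X a ha hX hXZ hZ
    rcases ha.eq_or_lt with h | h
    · rw [← h, hp0]; simp
    · obtain ⟨c, hc, hderiv⟩ := exists_deriv_eq_slope p h
        (hp.continuousOn.mono (Set.Icc_subset_Ici_self))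
        ((hp.differentiableOn one_ne_zero).mono
          (fun u hu => Set.mem_Ici.2 (le_of_lt hu.1)))
      have hc0 : 0 < c := hc.1
      have hdw : derivWithin p (Set.Ici (0 : ℝ)) c = deriv p c :=
        derivWithin_of_mem_nhds (Ici_mem_nhds hc0)
      have hpa : p a = deriv p c * a := by
        rw [hderiv, hp0]; field_simp; ring
      have h1 := hZ c hc0.le
      rw [hdw] at h1
      have hd0 : 0 < deriv p c := by rw [← hdw]; exact hp' c hc0.le
      have h2 : X * deriv p c ≤ 1 :=
        le_trans (mul_le_mul_of_nonneg_right hXZ hd0.le) h1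
      have h3 := mul_le_mul_of_nonneg_right h2 h.le
      rw [hpa]; nlinarith
  -- the telescoping identity for the delayed sum
  have key_sum : ∀ n : ℤ,
      (∑ k ∈ Finset.range r, x (n - k) * p (s (n - k)) * (1 - E) ^ (k + 1))
        = (1 - E) * (x n * p (s n))
          + (1 - E) * (∑ k ∈ Finset.range r,
              x (n - 1 - k) * p (s (n - 1 - k)) * (1 - E) ^ (k + 1))
          - x (n - r) * p (s (n - r)) * (1 - E) ^ (r + 1) := by
    intro n
    have h1 := Finset.sum_range_succ
      (fun k : ℕ => x (n - k) * p (s (n - k)) * (1 - E) ^ (k + 1)) r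
    have h2 := Finset.sum_range_succ'
      (fun k : ℕ => x (n - k) * p (s (n - k)) * (1 - E) ^ (k + 1)) r
    have h3 : ∀ k ∈ Finset.range r,
        x (n - ((k + 1 : ℕ) : ℤ)) * p (s (n - ((k + 1 : ℕ) : ℤ)))
            * (1 - E) ^ ((k + 1) + 1)
          = (1 - E) * (x (n - 1 - k) * p (s (n - 1 - k)) * (1 - E) ^ (k + 1)) := by
      intro k _
      have hk : n - ((k + 1 : ℕ) : ℤ) = n - 1 - k := by push_cast; ring
      rw [hk]; ring
    rw [Finset.sum_congr rfl h3, ← Finset.mul_sum] at h2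
    simp only [Nat.cast_zero, sub_zero, zero_add, pow_one] at h2
    linarith [h1, h2]
  -- conservation law : the sum satisfies the same recursion as `z`
  have sumid : ∀ n : ℕ,
      s ((n : ℤ) + 1) + x ((n : ℤ) + 1) + y ((n : ℤ) + 1)
        = E * s0 n + (1 - E) * (s n + x n + y n) := by
    intro n
    have hn0 : (0 : ℤ) ≤ (n : ℤ) := Int.natCast_nonneg n
    have e1 := hs n hn0
    have e2 := hx n hn0
    have e3 := hy n (by linarith)
    have e4 := hy ((n : ℤ) - 1) (by linarith)
    have hcast : ((n : ℤ) - 1) + 1 = (n : ℤ) := by ring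
    rw [hcast] at e4
    have e5 := key_sum (n : ℤ)
    rw [e1, e2, e3, e5, ← e4]
    ring
  -- nonnegativity of `y` at nonnegative times
  have hyn : ∀ n : ℕ,
      (∀ j : ℤ, -(r : ℤ) ≤ j → j ≤ (n : ℤ) → 0 ≤ s j ∧ 0 ≤ x j) → 0 ≤ y n := by
    intro n h1
    have e4 := hy ((n : ℤ) - 1) (by have := Int.natCast_nonneg n; linarith)
    have hcast : ((n : ℤ) - 1) + 1 = (n : ℤ) := by ring
    rw [hcast] at e4
    rw [e4]
    apply Finset.sum_nonneg
    intro k hk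
    have hk' : (k : ℤ) < r := by exact_mod_cast Finset.mem_range.1 hk
    have hjlo : -(r : ℤ) ≤ (n : ℤ) - 1 - k := by
      have := Int.natCast_nonneg n; omega
    have hjhi : (n : ℤ) - 1 - k ≤ (n : ℤ) := by
      have := Int.natCast_nonneg k; omega
    obtain ⟨hs', hx'⟩ := h1 ((n : ℤ) - 1 - k) hjlo hjhi
    have := pnn _ hs'
    positivity
  -- positivity of `s (n+1)`, given the induction package at time `n`
  have hspos : ∀ n : ℕ,
      ((∀ j : ℤ, -(r : ℤ) ≤ j → j ≤ (n : ℤ) → 0 ≤ s j ∧ 0 ≤ x j)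
        ∧ s n + x n + y n ≤ z n) → 0 < s ((n : ℤ) + 1) := by
    intro n ⟨h1, h2⟩
    have hn0 : (0 : ℤ) ≤ (n : ℤ) := Int.natCast_nonneg n
    have hsn : 0 ≤ s (n : ℤ) := (h1 n (by omega) le_rfl).1
    have hxn : 0 ≤ x (n : ℤ) := (h1 n (by omega) le_rfl).2
    have hyn' := hyn n h1
    have hxz : x (n : ℤ) ≤ z (n : ℤ) := by linarith
    have hkey := key (z n) (x n) (s n) hsn hxn hxz (hzp n hn0)
    have h3 : 0 ≤ (1 - E) * (s (n : ℤ) - x (n : ℤ) * p (s (n : ℤ))) :=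
      mul_nonneg hEp.le (by linarith)
    have h4 : 0 < E * s0 (n : ℤ) := mul_pos hE0 (hs0pos n)
    rw [hs n hn0]
    linarith
  -- the main induction
  have hP : ∀ n : ℕ,
      (∀ j : ℤ, -(r : ℤ) ≤ j → j ≤ (n : ℤ) → 0 ≤ s j ∧ 0 ≤ x j)
        ∧ s n + x n + y n ≤ z n := by
    intro n
    induction n with
    | zero =>
      refine ⟨fun j hj1 hj2 => ?_, ?_⟩
      · have hj2' : j ≤ 0 := by exact_mod_cast hj2
        exact ⟨hinits j hj1 hj2', hinitx j hj1 hj2'⟩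
      · simpa using hinit
    | succ n ih =>
      have hn0 : (0 : ℤ) ≤ (n : ℤ) := Int.natCast_nonneg n
      have hfirst : ∀ j : ℤ, -(r : ℤ) ≤ j → j ≤ ((n + 1 : ℕ) : ℤ) →
          0 ≤ s j ∧ 0 ≤ x j := by
        intro j hj1 hj2
        by_cases hj : j ≤ (n : ℤ)
        · exact ih.1 j hj1 hj
        · have hj' : j = (n : ℤ) + 1 := by push_cast at hj2 ⊢; omega
          subst hj'
          constructor
          · exact (hspos n ih).le
          · rw [hx n hn0]
            have hx1 : 0 ≤ x (n : ℤ) := (ih.1 n (by omega) le_rfl).2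
            have hlo : -(r : ℤ) ≤ (n : ℤ) - r := by omega
            have hhi : (n : ℤ) - r ≤ (n : ℤ) := by
              have := Int.natCast_nonneg r; omega
            obtain ⟨hs2, hx2⟩ := ih.1 ((n : ℤ) - r) hlo hhi
            have hps := pnn _ hs2
            have h5 : (0 : ℝ) ≤ (1 - E) ^ (r + 1) := by positivity
            positivity
      refine ⟨hfirst, ?_⟩
      have hzeq := hz n hn0
      have hsum := sumid n
      have h6 := mul_le_mul_of_nonneg_left ih.2 hEp.le
      push_cast
      push_cast at hsum
      linarith
  -- conclusion
  intro t ht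
  obtain ⟨n, rfl⟩ : ∃ n : ℕ, t = (n : ℤ) + 1 := ⟨(t - 1).toNat, by omega⟩
  constructor
  · have := (hP (n + 1)).1 ((n : ℤ) + 1)
      (by have := Int.natCast_nonneg r; have := Int.natCast_nonneg n; omega)
      (by push_cast; omega)
    exact this.2
  · exact hspos n (hP n)
end

section
/- Let r ∈ ℕ, M > 0, and let f, g, φ, ψ be nonnegative sequences with f_t ≤ M for all t ≥ 0, satisfying the recursions φ_{t+1} = ∏_{k=t+1-r}^{t}(1+φ_k f_k)^{-1} and ψ_{t+1} = ∏_{k=t+1-r}^{t}(1+ψ_k g_k)^{-1}. Assume there exists ε > 0 with f_t > g_t + ε for all t ≥ 0. Then there exist constants η > 0 and T ≥ r such that ∏_{k=t_1+1}^{t_2} (1+φ_{k-r} f_{k-r})/(1+ψ_{k-r} g_{k-r}) > (1+η)^{2(t_2-t_1)} for all t_1 ≥ T and t_2 - t_1 ≥ T. -/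
private lemma one_le_prod_real {s : Finset ℤ} {F : ℤ → ℝ} (h : ∀ k ∈ s, 1 ≤ F k) :
    1 ≤ ∏ k ∈ s, F k := by
  calc (1:ℝ) = ∏ _k ∈ s, (1:ℝ) := by simp
    _ ≤ _ := Finset.prod_le_prod (fun _ _ => zero_le_one) h

private lemma prodIoc_split (F : ℤ → ℝ) {a b c : ℤ} (h1 : a ≤ b) (h2 : b ≤ c) :
    (∏ k ∈ Finset.Ioc a c, F k)
      = (∏ k ∈ Finset.Ioc a b, F k) * ∏ k ∈ Finset.Ioc b c, F k := by
  rw [← Finset.Ioc_union_Ioc_eq_Ioc h1 h2, Finset.prod_union]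
  refine Finset.disjoint_left.2 fun x hx h'x => ?_
  simp only [Finset.mem_Ioc] at hx h'x
  omega

private lemma prodIoc_one_le (F : ℤ → ℝ) {a b : ℤ}
    (h1 : ∀ k : ℤ, a < k → 1 ≤ F k) :
    1 ≤ ∏ k ∈ Finset.Ioc a b, F k :=
  one_le_prod_real (fun k hk => h1 k (Finset.mem_Ioc.1 hk).1)

private lemma prodIoc_le_pow (F : ℤ → ℝ) {C : ℝ} {a b : ℤ}
    (h1 : ∀ k : ℤ, a < k → 1 ≤ F k) (h2 : ∀ k : ℤ, a < k → F k ≤ C) :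
    (∏ k ∈ Finset.Ioc a b, F k) ≤ C ^ (b - a).toNat := by
  calc (∏ k ∈ Finset.Ioc a b, F k) ≤ ∏ _k ∈ Finset.Ioc a b, C := by
        refine Finset.prod_le_prod (fun k hk => ?_) (fun k hk => ?_)
        · exact le_trans zero_le_one (h1 k (Finset.mem_Ioc.1 hk).1)
        · exact h2 k (Finset.mem_Ioc.1 hk).1
    _ = C ^ (b - a).toNat := by rw [Finset.prod_const, Int.card_Ioc]

private lemma sysRec (F h : ℤ → ℝ) (r : ℕ)
    (hrec : ∀ t : ℤ, 0 ≤ t → h (t+1) = (∏ k ∈ Finset.Icc (t + 1 - (r:ℤ)) t, (1 + h k * F k))⁻¹)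
    (hone : ∀ k : ℤ, 1 ≤ k → 1 ≤ 1 + h k * F k)
    (t : ℤ) (ht : (r:ℤ) ≤ t) :
    (∏ k ∈ Finset.Ioc (0:ℤ) (t+1), (1 + h k * F k))
      = (∏ k ∈ Finset.Ioc (0:ℤ) t, (1 + h k * F k))
        + F (t+1) * ∏ k ∈ Finset.Ioc (0:ℤ) (t - r), (1 + h k * F k) := by
  have hr0 : (0:ℤ) ≤ (r:ℤ) := Int.natCast_nonneg r
  set Fac : ℤ → ℝ := fun k => 1 + h k * F k with hFac
  have e1 : Finset.Icc (t + 1 - (r:ℤ)) t = Finset.Ioc (t - (r:ℤ)) t := by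
    ext x; simp only [Finset.mem_Icc, Finset.mem_Ioc]; omega
  have split1 : (∏ k ∈ Finset.Ioc (0:ℤ) t, Fac k)
      = (∏ k ∈ Finset.Ioc (0:ℤ) (t - r), Fac k) * ∏ k ∈ Finset.Ioc (t - (r:ℤ)) t, Fac k :=
    prodIoc_split Fac (by omega) (by omega)
  have hW : 1 ≤ ∏ k ∈ Finset.Ioc (t - (r:ℤ)) t, Fac k :=
    prodIoc_one_le Fac (fun k hk => hone k (by omega))
  have hWne : (∏ k ∈ Finset.Ioc (t - (r:ℤ)) t, Fac k) ≠ 0 := by positivity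
  have hlast : (∏ k ∈ Finset.Ioc (0:ℤ) (t+1), Fac k)
      = (∏ k ∈ Finset.Ioc (0:ℤ) t, Fac k) * Fac (t+1) := by
    rw [prodIoc_split Fac (le_trans hr0 ht) (by omega)]
    congr 1
    have : Finset.Ioc t (t+1) = {t+1} := by
      ext x; simp only [Finset.mem_Ioc, Finset.mem_singleton]; omega
    rw [this, Finset.prod_singleton]
  have hval : h (t+1) = (∏ k ∈ Finset.Ioc (t - (r:ℤ)) t, Fac k)⁻¹ := by
    rw [hrec t (le_trans hr0 ht), e1]
  rw [hlast, split1]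
  show (∏ k ∈ Finset.Ioc (0:ℤ) (t - r), Fac k) * (∏ k ∈ Finset.Ioc (t - (r:ℤ)) t, Fac k)
      * (1 + h (t+1) * F (t+1)) = _
  rw [hval]
  field_simp

set_option maxHeartbeats 4000000 in
/-- comparison lemma for the delay-correction sequences: if
`f_t > g_t + ε` then the windowed products of `(1+φf)/(1+ψg)` grow like
`(1+η)^{2(t₂-t₁)}` for large windows. -/
theorem stmt9 (r : ℕ) (M : ℝ) (hM : 0 < M)
    (f g φ ψ : ℤ → ℝ)
    (hnn : ∀ t : ℤ, 1 - (r : ℤ) ≤ t → 0 ≤ f t ∧ 0 ≤ g t ∧ 0 ≤ φ t ∧ 0 ≤ ψ t)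
    (hfM : ∀ t : ℤ, 0 ≤ t → f t ≤ M)
    (hφ : ∀ t : ℤ, 0 ≤ t →
      φ (t + 1) = (∏ k ∈ Finset.Icc (t + 1 - (r : ℤ)) t, (1 + φ k * f k))⁻¹)
    (hψ : ∀ t : ℤ, 0 ≤ t →
      ψ (t + 1) = (∏ k ∈ Finset.Icc (t + 1 - (r : ℤ)) t, (1 + ψ k * g k))⁻¹)
    (ε : ℝ) (hε : 0 < ε) (hfg : ∀ t : ℤ, 0 ≤ t → g t + ε < f t) :
    ∃ η : ℝ, 0 < η ∧ ∃ T : ℤ, (r : ℤ) ≤ T ∧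
      ∀ t1 t2 : ℤ, T ≤ t1 → T ≤ t2 - t1 →
        (∏ k ∈ Finset.Icc (t1 + 1) t2,
            (1 + φ (k - r) * f (k - r)) / (1 + ψ (k - r) * g (k - r)))
          > (1 + η) ^ ((2 * (t2 - t1)).toNat) := by
  have hr0 : (0:ℤ) ≤ (r:ℤ) := Int.natCast_nonneg r
  -- ## pointwise bounds
  have hf0 : ∀ k : ℤ, 1 ≤ k → 0 ≤ f k := fun k hk => (hnn k (by omega)).1
  have hg0 : ∀ k : ℤ, 1 ≤ k → 0 ≤ g k := fun k hk => (hnn k (by omega)).2.1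
  have hgM : ∀ k : ℤ, 1 ≤ k → g k ≤ M := fun k hk => by
    have h1 := hfg k (by omega); have h2 := hfM k (by omega); linarith
  have hG1 : ∀ k : ℤ, 1 ≤ k → 1 ≤ 1 + φ k * f k := by
    intro k hk
    have h1 := (hnn k (by omega)).2.2.1
    have h2 := hf0 k hk
    nlinarith
  have hH1 : ∀ k : ℤ, 1 ≤ k → 1 ≤ 1 + ψ k * g k := by
    intro k hk
    have h1 := (hnn k (by omega)).2.2.2
    have h2 := hg0 k hk
    nlinarith
  have hφle1 : ∀ k : ℤ, 1 ≤ k → φ k ≤ 1 := by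
    intro k hk
    have h := hφ (k-1) (by omega)
    rw [show k - 1 + 1 = k by ring] at h
    have hprod : 1 ≤ ∏ j ∈ Finset.Icc (k - (r:ℤ)) (k-1), (1 + φ j * f j) := by
      refine one_le_prod_real fun j hj => ?_
      simp only [Finset.mem_Icc] at hj
      have h1 := (hnn j (by omega)).2.2.1
      have h2 := (hnn j (by omega)).1
      nlinarith
    rw [h]
    exact inv_le_one_of_one_le₀ hprod
  have hψle1 : ∀ k : ℤ, 1 ≤ k → ψ k ≤ 1 := by
    intro k hk
    have h := hψ (k-1) (by omega)
    rw [show k - 1 + 1 = k by ring] at h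
    have hprod : 1 ≤ ∏ j ∈ Finset.Icc (k - (r:ℤ)) (k-1), (1 + ψ j * g j) := by
      refine one_le_prod_real fun j hj => ?_
      simp only [Finset.mem_Icc] at hj
      have h1 := (hnn j (by omega)).2.2.2
      have h2 := (hnn j (by omega)).2.1
      nlinarith
    rw [h]
    exact inv_le_one_of_one_le₀ hprod
  have hGM : ∀ k : ℤ, 1 ≤ k → 1 + φ k * f k ≤ 1 + M := by
    intro k hk
    have h1 := (hnn k (by omega)).2.2.1
    have h2 := hf0 k hk
    have h3 := hfM k (by omega)
    have h4 := hφle1 k hk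
    nlinarith
  have hHM : ∀ k : ℤ, 1 ≤ k → 1 + ψ k * g k ≤ 1 + M := by
    intro k hk
    have h1 := (hnn k (by omega)).2.2.2
    have h2 := hg0 k hk
    have h3 := hgM k hk
    have h4 := hψle1 k hk
    nlinarith
  -- ## the accumulated products
  set Φ : ℤ → ℝ := fun t => ∏ k ∈ Finset.Ioc (0:ℤ) t, (1 + φ k * f k) with hΦdef
  set Ψ : ℤ → ℝ := fun t => ∏ k ∈ Finset.Ioc (0:ℤ) t, (1 + ψ k * g k) with hΨdef
  have hΦ1 : ∀ t : ℤ, 1 ≤ Φ t := fun t => prodIoc_one_le _ (fun k hk => hG1 k (by omega))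
  have hΨ1 : ∀ t : ℤ, 1 ≤ Ψ t := fun t => prodIoc_one_le _ (fun k hk => hH1 k (by omega))
  have hΦ0 : ∀ t : ℤ, 0 < Φ t := fun t => lt_of_lt_of_le one_pos (hΦ1 t)
  have hΨ0 : ∀ t : ℤ, 0 < Ψ t := fun t => lt_of_lt_of_le one_pos (hΨ1 t)
  have hΦsplit : ∀ a b : ℤ, 0 ≤ a → a ≤ b →
      Φ b = Φ a * ∏ k ∈ Finset.Ioc a b, (1 + φ k * f k) := fun a b ha hab =>
    prodIoc_split _ ha hab
  have hΨsplit : ∀ a b : ℤ, 0 ≤ a → a ≤ b →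
      Ψ b = Ψ a * ∏ k ∈ Finset.Ioc a b, (1 + ψ k * g k) := fun a b ha hab =>
    prodIoc_split _ ha hab
  have hΨmono : ∀ a b : ℤ, 0 ≤ a → a ≤ b → Ψ a ≤ Ψ b := by
    intro a b ha hab
    rw [hΨsplit a b ha hab]
    have h1 : 1 ≤ ∏ k ∈ Finset.Ioc a b, (1 + ψ k * g k) :=
      prodIoc_one_le _ (fun k hk => hH1 k (by omega))
    nlinarith [hΨ0 a]
  have hΦratio : ∀ a b : ℤ, 0 ≤ a → a ≤ b → Φ b ≤ Φ a * (1+M) ^ (b - a).toNat := by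
    intro a b ha hab
    rw [hΦsplit a b ha hab]
    have h1 : (∏ k ∈ Finset.Ioc a b, (1 + φ k * f k)) ≤ (1+M) ^ (b - a).toNat :=
      prodIoc_le_pow _ (fun k hk => hG1 k (by omega)) (fun k hk => hGM k (by omega))
    nlinarith [hΦ0 a]
  have hΨratio : ∀ a b : ℤ, 0 ≤ a → a ≤ b → Ψ b ≤ Ψ a * (1+M) ^ (b - a).toNat := by
    intro a b ha hab
    rw [hΨsplit a b ha hab]
    have h1 : (∏ k ∈ Finset.Ioc a b, (1 + ψ k * g k)) ≤ (1+M) ^ (b - a).toNat :=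
      prodIoc_le_pow _ (fun k hk => hH1 k (by omega)) (fun k hk => hHM k (by omega))
    nlinarith [hΨ0 a]
  have recΦ : ∀ t : ℤ, (r:ℤ) ≤ t → Φ (t+1) = Φ t + f (t+1) * Φ (t - r) :=
    fun t ht => sysRec f φ r hφ hG1 t ht
  have recΨ : ∀ t : ℤ, (r:ℤ) ≤ t → Ψ (t+1) = Ψ t + g (t+1) * Ψ (t - r) :=
    fun t ht => sysRec g ψ r hψ hH1 t ht
  -- ## constants
  set Q : ℝ := (1+M) ^ r with hQdef
  have h1M : (1:ℝ) ≤ 1 + M := by linarith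
  have hQ1 : 1 ≤ Q := one_le_pow₀ h1M
  have hQ0 : 0 < Q := lt_of_lt_of_le one_pos hQ1
  have hden : 0 < ε + M + Q := by linarith
  set s : ℝ := ε / (2*(ε+M+Q)) with hsdef
  have hs0 : 0 < s := by positivity
  have hsval : s * (ε+M+Q) = ε/2 := by
    rw [hsdef]; field_simp
  have hs2 : s ≤ 1/2 := by nlinarith
  set δ : ℝ := s / (r+1) with hδdef
  have hδ0 : 0 < δ := by positivity
  have hrδ : ((r:ℝ)+1) * δ = s := by
    rw [hδdef]; field_simp
  have hδs : δ ≤ s := by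
    rw [hδdef]
    apply div_le_self hs0.le
    have : (0:ℝ) ≤ (r:ℝ) := Nat.cast_nonneg r
    linarith
  have hδhalf : δ ≤ 1/2 := le_trans hδs hs2
  set lam : ℝ := 1 + δ with hlamdef
  have hlam1 : 1 < lam := by rw [hlamdef]; linarith
  have hlam0 : 0 < lam := lt_trans one_pos hlam1
  have hb1 : 1 - ((r:ℝ)+1)*δ ≤ (1-δ) ^ (r+1) := by
    have h := one_add_mul_le_pow (a := -δ) (by linarith) (r+1)
    have e : (1:ℝ) + (r+1 : ℕ) * (-δ) = 1 - ((r:ℝ)+1)*δ := by push_cast; ring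
    rw [e] at h
    rw [← sub_eq_add_neg] at h; exact h
  have h1s : 0 < 1 - s := by linarith
  have hprodle : (1-δ)^(r+1) * lam^(r+1) ≤ 1 := by
    rw [← mul_pow]
    apply pow_le_one₀ (by nlinarith) (by nlinarith)
  have hAle : (1 - s) * lam^(r+1) ≤ 1 := by
    have h2 : 1 - s ≤ (1-δ)^(r+1) := by
      calc 1 - s = 1 - ((r:ℝ)+1)*δ := by rw [hrδ]
        _ ≤ _ := hb1
    nlinarith [pow_pos hlam0 (r+1)]
  have hA1 : 1 ≤ lam^(r+1) := one_le_pow₀ hlam1.le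
  have hA2 : lam^(r+1) ≤ 2 := by nlinarith
  have hAm1 : lam^(r+1) - 1 ≤ 2*s := by nlinarith
  have hlr : lam^r ≤ lam^(r+1) := pow_le_pow_right₀ hlam1.le (by omega)
  have hlr0 : 0 < lam^r := pow_pos hlam0 r
  have hC2 : lam^r * δ * Q + (lam^(r+1) - 1) * M ≤ ε := by
    have h1 : lam^r * δ * Q ≤ 2*δ*Q := by
      have hl2 : lam^r ≤ 2 := le_trans hlr hA2
      nlinarith [mul_le_mul_of_nonneg_right (mul_le_mul_of_nonneg_right hl2 hδ0.le) hQ0.le]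
    have h2 : (lam^(r+1)-1)*M ≤ 2*s*M := by nlinarith [mul_le_mul_of_nonneg_right hAm1 hM.le]
    have h4 : 2*δ*Q ≤ 2*s*Q := by nlinarith
    have h3 : 2*s*(Q+M) ≤ ε := by nlinarith
    linarith
  -- ## key one-step inequality
  have hstep : ∀ t : ℤ, (r:ℤ) ≤ t →
      lam^(r+1) * Ψ (t+1) ≤ lam^r * Ψ t + f (t+1) * Ψ (t - r) := by
    intro t ht
    have hrecc := recΨ t ht
    have hQbd : Ψ t ≤ Q * Ψ (t - r) := by
      have h1 := hΨratio (t - r) t (by omega) (by omega)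
      have e : (t - (t - (r:ℤ))).toNat = r := by omega
      rw [e] at h1
      nlinarith [hΨ0 (t - (r:ℤ))]
    have hΨ' := hΨ1 (t - (r:ℤ))
    have hgle : lam^(r+1) * g (t+1) ≤ f (t+1) - ε + (lam^(r+1)-1) * M := by
      have h1 := hfg (t+1) (by omega)
      have h2 := hgM (t+1) (by omega)
      have h3 := hg0 (t+1) (by omega)
      nlinarith
    have e1 : lam^(r+1) = lam^r + lam^r * δ := by
      rw [pow_succ, hlamdef]; ring
    rw [hrecc]
    have t1 : lam^r * δ * Ψ t ≤ lam^r * δ * (Q * Ψ (t - r)) :=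
      mul_le_mul_of_nonneg_left hQbd (by positivity)
    have t2 : (lam^(r+1) * g (t+1)) * Ψ (t - r)
        ≤ (f (t+1) - ε + (lam^(r+1)-1) * M) * Ψ (t - r) :=
      mul_le_mul_of_nonneg_right hgle (by linarith)
    have t3 : (lam^r * δ * Q + (lam^(r+1)-1) * M - ε) * Ψ (t - r) ≤ 0 :=
      mul_nonpos_of_nonpos_of_nonneg (by linarith) (by linarith)
    have expand : lam^(r+1) * (Ψ t + g (t+1) * Ψ (t - r))
        = (lam^r * Ψ t + lam^r * δ * Ψ t) + (lam^(r+1) * g (t+1)) * Ψ (t - r) := by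
      rw [e1]; ring
    nlinarith [t1, t2, t3, expand]
  -- ## main induction
  have main : ∀ a : ℤ, (r:ℤ) ≤ a → ∀ n : ℕ,
      Φ a * lam^n * Ψ (a - r + n) ≤ lam^r * Q * Ψ a * Φ (a - r + n) := by
    intro a ha n
    induction n using Nat.strong_induction_on with
    | _ n ih =>
      by_cases hn : n ≤ r
      · -- base case
        set t : ℤ := a - r + n with htdef
        have ht0 : 0 ≤ t := by omega
        have hta : t ≤ a := by omega
        have h1 : Φ a ≤ Q * Φ t := by
          have hr1 := hΦratio t a ht0 hta
          have h2 : (1+M) ^ (a - t).toNat ≤ Q := by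
            rw [hQdef]
            apply pow_le_pow_right₀ h1M
            omega
          nlinarith [hΦ0 t]
        have h2 : Ψ t ≤ Ψ a := hΨmono t a ht0 hta
        have h3 : lam^n ≤ lam^r := pow_le_pow_right₀ hlam1.le hn
        have h4 : 0 < lam^n := pow_pos hlam0 n
        have s1 : Φ a * lam^n ≤ (Q * Φ t) * lam^n :=
          mul_le_mul_of_nonneg_right h1 h4.le
        have s2 : Φ a * lam^n * Ψ t ≤ (Q * Φ t) * lam^n * Ψ t :=
          mul_le_mul_of_nonneg_right s1 (hΨ0 t).le
        have s3 : (Q * Φ t) * lam^n * Ψ t ≤ (Q * Φ t) * lam^r * Ψ t := by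
          have := mul_le_mul_of_nonneg_left h3 (mul_nonneg hQ0.le (hΦ0 t).le)
          exact mul_le_mul_of_nonneg_right this (hΨ0 t).le
        have s4 : (Q * Φ t) * lam^r * Ψ t ≤ (Q * Φ t) * lam^r * Ψ a := by
          exact mul_le_mul_of_nonneg_left h2
            (mul_nonneg (mul_nonneg hQ0.le (hΦ0 t).le) hlr0.le)
        calc Φ a * lam^n * Ψ t ≤ (Q * Φ t) * lam^r * Ψ a := le_trans s2 (le_trans s3 s4)
          _ = lam^r * Q * Ψ a * Φ t := by ring
      · -- inductive step
        push_neg at hn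
        obtain ⟨m, rfl⟩ : ∃ m, n = m + (r+1) := ⟨n - (r+1), by omega⟩
        have e0 : (a - r + ((m + (r+1) : ℕ) : ℤ)) = (a + m) + 1 := by push_cast; ring
        have e1 : (a - r + ((m + r : ℕ) : ℤ)) = a + m := by push_cast; ring
        have e2 : (a - r + ((m : ℕ) : ℤ)) = (a + m) - r := by push_cast; ring
        have ham : (r:ℤ) ≤ a + m := by
          have : (0:ℤ) ≤ (m:ℤ) := Int.natCast_nonneg m
          omega
        have hrecΦ := recΦ (a + m) ham
        have hstep' := hstep (a + m) ham
        have ih1 := ih (m + r) (by omega)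
        have ih2 := ih m (by omega)
        rw [e1] at ih1
        rw [e2] at ih2
        rw [e0]
        have hf' : 0 ≤ f (a + m + 1) := hf0 _ (by omega)
        have h5 : Φ a * lam^m * (lam^(r+1) * Ψ (a + m + 1))
            ≤ Φ a * lam^m * (lam^r * Ψ (a + m) + f (a + m + 1) * Ψ (a + m - r)) := by
          apply mul_le_mul_of_nonneg_left hstep'
          have := hΦ0 a
          positivity
        have e3 : lam ^ (m + (r+1)) = lam^m * lam^(r+1) := pow_add lam m (r+1)
        have e4 : lam ^ (m + r) = lam^m * lam^r := pow_add lam m r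
        have h7 : f (a + m + 1) * (Φ a * lam^m * Ψ (a + m - r))
            ≤ f (a + m + 1) * (lam^r * Q * Ψ a * Φ (a + m - r)) :=
          mul_le_mul_of_nonneg_left ih2 hf'
        calc Φ a * lam ^ (m + (r+1)) * Ψ (a + m + 1)
            = Φ a * lam^m * (lam^(r+1) * Ψ (a + m + 1)) := by rw [e3]; ring
          _ ≤ Φ a * lam^m * (lam^r * Ψ (a + m) + f (a + m + 1) * Ψ (a + m - r)) := h5
          _ = Φ a * lam^(m+r) * Ψ (a + m)
              + f (a + m + 1) * (Φ a * lam^m * Ψ (a + m - r)) := by rw [e4]; ring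
          _ ≤ lam^r * Q * Ψ a * Φ (a + m)
              + f (a + m + 1) * (lam^r * Q * Ψ a * Φ (a + m - r)) := add_le_add ih1 h7
          _ = lam^r * Q * Ψ a * (Φ (a + m) + f (a + m + 1) * Φ (a + m - r)) := by ring
          _ = lam^r * Q * Ψ a * Φ (a + m + 1) := by rw [← hrecΦ]
  -- ## choose η and T
  set η : ℝ := δ/8 with hηdef
  have hη0 : 0 < η := by positivity
  have hη4 : (1+η)^4 ≤ lam := by
    rw [hηdef, hlamdef]
    have hd2 : δ^2 ≤ δ/2 := by nlinarith
    have hd3 : δ^3 ≤ δ/4 := by nlinarith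
    have hd4 : δ^4 ≤ δ/8 := by nlinarith
    nlinarith [hd2, hd3, hd4]
  obtain ⟨N, hN⟩ := exists_nat_gt (Q^2 / δ)
  have hQN : Q^2 < N * δ := by
    rw [div_lt_iff₀ hδ0] at hN
    linarith
  refine ⟨η, hη0, max (2*(r:ℤ)) (N:ℤ), ?_, ?_⟩
  · have h := le_max_left (2*(r:ℤ)) (N:ℤ)
    omega
  intro t1 t2 ht1 hL
  have hT2r : 2*(r:ℤ) ≤ max (2*(r:ℤ)) (N:ℤ) := le_max_left _ _
  have hTN : (N:ℤ) ≤ max (2*(r:ℤ)) (N:ℤ) := le_max_right _ _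
  set a : ℤ := t1 - r with hadef
  set b : ℤ := t2 - r with hbdef
  have hra : (r:ℤ) ≤ a := by omega
  have hab : a ≤ b := by omega
  set Lt : ℕ := (t2 - t1).toNat with hLtdef
  have hLt : (Lt : ℤ) = t2 - t1 := by omega
  -- rewrite the product
  have hre : (∏ k ∈ Finset.Icc (t1 + 1) t2,
        (1 + φ (k - r) * f (k - r)) / (1 + ψ (k - r) * g (k - r)))
      = (∏ k ∈ Finset.Ioc a b, (1 + φ k * f k)) / (∏ k ∈ Finset.Ioc a b, (1 + ψ k * g k)) := by
    rw [← Finset.prod_div_distrib]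
    rw [show Finset.Icc (t1 + 1) t2
        = Finset.map (addRightEmbedding (r:ℤ)) (Finset.Ioc a b) from ?_]
    · rw [Finset.prod_map]
      apply Finset.prod_congr rfl
      intro x hx
      simp only [addRightEmbedding_apply]
      rw [show x + (r:ℤ) - (r:ℤ) = x by ring]
    · have e : Finset.Ioc a b = Finset.Icc (a+1) b := by
        ext x; simp only [Finset.mem_Icc, Finset.mem_Ioc]; omega
      rw [e, Finset.map_add_right_Icc]
      congr 1 <;> omega
  rw [hre]
  have hPnum : (∏ k ∈ Finset.Ioc a b, (1 + φ k * f k)) = Φ b / Φ a := by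
    rw [hΦsplit a b (by omega) hab]
    have := (hΦ0 a).ne'
    field_simp
  have hPden : (∏ k ∈ Finset.Ioc a b, (1 + ψ k * g k)) = Ψ b / Ψ a := by
    rw [hΨsplit a b (by omega) hab]
    have := (hΨ0 a).ne'
    field_simp
  rw [hPnum, hPden]
  -- apply the main induction
  have hkey := main a hra (Lt + r)
  have e5 : a - r + ((Lt + r : ℕ) : ℤ) = b := by push_cast; omega
  rw [e5] at hkey
  have e6 : lam ^ (Lt + r) = lam^Lt * lam^r := pow_add lam Lt r
  rw [e6] at hkey
  have hkey2 : Φ a * lam^Lt * Ψ b ≤ Q * Ψ a * Φ b := by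
    have e7 : Φ a * (lam^Lt * lam^r) * Ψ b = lam^r * (Φ a * lam^Lt * Ψ b) := by ring
    have e8 : lam^r * Q * Ψ a * Φ b = lam^r * (Q * Ψ a * Φ b) := by ring
    rw [e7, e8] at hkey
    exact le_of_mul_le_mul_left hkey hlr0
  -- final numeric comparison
  have hΦa := hΦ0 a; have hΦb := hΦ0 b; have hΨa := hΨ0 a; have hΨb := hΨ0 b
  have hP0 : 0 < Φ b / Φ a / (Ψ b / Ψ a) := div_pos (div_pos hΦb hΦa) (div_pos hΨb hΨa)
  have hPeq : Φ b / Φ a / (Ψ b / Ψ a) = (Φ b * Ψ a) / (Φ a * Ψ b) := by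
    field_simp
  have hPge : lam^Lt / Q ≤ Φ b / Φ a / (Ψ b / Ψ a) := by
    rw [hPeq, div_le_div_iff₀ hQ0 (mul_pos hΦa hΨb)]
    linarith [hkey2]
  have hexp : (2 * (t2 - t1)).toNat = 2 * Lt := by omega
  rw [hexp]
  have hNle : N ≤ Lt := by omega
  have h8 : (1:ℝ) + N * δ ≤ lam^N := by
    have h := one_add_mul_le_pow (a := δ) (by linarith) N
    rw [hlamdef]
    exact h
  have h9 : lam^N ≤ lam^Lt := pow_le_pow_right₀ hlam1.le hNle
  have hQ2lam : Q^2 < lam^Lt := by linarith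
  have hpows : ((1+η)^(2*Lt))^2 ≤ lam^Lt := by
    have e : ((1+η)^(2*Lt))^2 = ((1+η)^4)^Lt := by
      rw [← pow_mul, ← pow_mul]
      congr 1
      ring
    rw [e]
    exact pow_le_pow_left₀ (by positivity) hη4 Lt
  have hPsq : lam^Lt < (Φ b / Φ a / (Ψ b / Ψ a))^2 := by
    have h11 : lam^Lt * Q^2 < lam^Lt * lam^Lt :=
      mul_lt_mul_of_pos_left hQ2lam (pow_pos hlam0 Lt)
    have h12 : lam^Lt < (lam^Lt)^2/Q^2 := by
      rw [lt_div_iff₀ (by positivity : (0:ℝ) < Q^2)]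
      calc lam^Lt * Q^2 < lam^Lt * lam^Lt := h11
        _ = (lam^Lt)^2 := (pow_two _).symm
    calc lam^Lt < (lam^Lt)^2/Q^2 := h12
      _ = (lam^Lt/Q)^2 := by rw [div_pow]
      _ ≤ (Φ b / Φ a / (Ψ b / Ψ a))^2 :=
          pow_le_pow_left₀ (div_nonneg (pow_nonneg hlam0.le Lt) hQ0.le) hPge 2
  exact lt_of_pow_lt_pow_left₀ 2 hP0.le (lt_of_le_of_lt hpows hPsq)
end

section
/- Let r ∈ ℕ, E ∈ (0,1), and suppose c_t, x_t > 0 for all t ≥ t_0 - r satisfy c_{t+1} = (1-E)(c_t + f_{t-r} c_{t-r}) and x_{t+1} = (1-E)(x_t + g_{t-r} x_{t-r}) for all t ≥ t_0. If there exists ε ∈ (0, inf f) with |f_t - g_t| < ε for all t ≥ t_0 - r, then c_t / x_t ≤ ((inf f)/(inf f - ε))^{(t - t_0)/(r+1)} · max_{t_0 ≤ s ≤ t_0 + r} (c_s / x_s) for all t ≥ t_0. -/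
private lemma mediant_le {a b A B : ℝ} (ha : 0 ≤ a) (hb : 0 ≤ b) (hA : 0 < A) (hB : 0 < B)
    (h : a * B ≤ b * A) : (a + b) / (A + B) ≤ b / B := by
  rw [div_le_div_iff₀ (by positivity) hB]
  nlinarith

/-- ratio comparison lemma.  If `c,x > 0` satisfy
`c_{t+1} = (1-E)(c_t + f_{t-r} c_{t-r})`, `x_{t+1} = (1-E)(x_t + g_{t-r} x_{t-r})`
for `t ≥ t₀`, and `|f_t - g_t| < ε < inf f`, then
`c_t/x_t ≤ (inf f/(inf f - ε))^{(t-t₀)/(r+1)} · max_{t₀ ≤ s ≤ t₀+r} c_s/x_s`. -/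
theorem stmt10 (E : ℝ) (hE0 : 0 < E) (hE1 : E < 1) (r : ℕ) (t0 : ℤ)
    (c x f g : ℤ → ℝ)
    (hcpos : ∀ t : ℤ, t0 - r ≤ t → 0 < c t)
    (hxpos : ∀ t : ℤ, t0 - r ≤ t → 0 < x t)
    (hc : ∀ t : ℤ, t0 ≤ t → c (t + 1) = (1 - E) * (c t + f (t - r) * c (t - r)))
    (hx : ∀ t : ℤ, t0 ≤ t → x (t + 1) = (1 - E) * (x t + g (t - r) * x (t - r)))
    (m : ℝ) (hm : IsGLB {y : ℝ | ∃ t : ℤ, t0 - r ≤ t ∧ y = f t} m) (hm0 : 0 < m)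
    (ε : ℝ) (hε0 : 0 < ε) (hεm : ε < m)
    (hfg : ∀ t : ℤ, t0 - r ≤ t → |f t - g t| < ε) :
    ∀ t : ℤ, t0 ≤ t →
      c t / x t ≤ (m / (m - ε)) ^ (((t : ℝ) - t0) / (r + 1)) *
        (Finset.Icc t0 (t0 + r)).sup'
          ⟨t0, Finset.mem_Icc.2 ⟨le_refl t0, le_add_of_nonneg_right (by positivity)⟩⟩ (fun u => c u / x u) := by
  have hE' : (0:ℝ) < 1 - E := by linarith
  have hmε : (0:ℝ) < m - ε := by linarith
  set K := m / (m - ε) with hKdef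
  have hK0 : 0 < K := by positivity
  have hK1 : (1:ℝ) ≤ K := (one_le_div hmε).2 (by linarith)
  have hmle : ∀ t : ℤ, t0 - r ≤ t → m ≤ f t := fun t htt => hm.1 ⟨t, htt, rfl⟩
  have hgpos : ∀ t : ℤ, t0 - r ≤ t → 0 < g t := by
    intro t htt
    have h1 := (abs_lt.1 (hfg t htt)).2
    have h2 := hmle t htt
    linarith
  have hfK : ∀ t : ℤ, t0 - r ≤ t → f t / g t ≤ K := by
    intro t htt
    have h1 := (abs_lt.1 (hfg t htt)).2
    have h2 := hmle t htt
    have h3 := hgpos t htt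
    rw [hKdef, div_le_div_iff₀ h3 hmε]
    nlinarith
  set M := (Finset.Icc t0 (t0 + r)).sup'
      ⟨t0, Finset.mem_Icc.2 ⟨le_refl t0, le_add_of_nonneg_right (by positivity)⟩⟩
      (fun u => c u / x u) with hMdef
  have hM0 : 0 < M := by
    have hmem : t0 ∈ Finset.Icc t0 (t0 + (r:ℤ)) := Finset.mem_Icc.2 (by omega)
    have h1 : c t0 / x t0 ≤ M := Finset.le_sup' (fun u => c u / x u) hmem
    have h2 : 0 < c t0 / x t0 := div_pos (hcpos t0 (by omega)) (hxpos t0 (by omega))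
    linarith
  have hr1 : (0:ℝ) < (r:ℝ) + 1 := by positivity
  have key : ∀ n : ℕ, c (t0 + n) / x (t0 + n) ≤ K ^ ((n : ℝ) / (r + 1)) * M := by
    intro n
    induction n using Nat.strong_induction_on with
    | _ n ih =>
      by_cases hn : n ≤ r
      · have hmem : t0 + (n:ℤ) ∈ Finset.Icc t0 (t0 + (r:ℤ)) := Finset.mem_Icc.2 (by omega)
        have h1 : c (t0 + n) / x (t0 + n) ≤ M := Finset.le_sup' (fun u => c u / x u) hmem
        have h2 : (1:ℝ) ≤ K ^ ((n:ℝ)/(r+1)) := Real.one_le_rpow hK1 (by positivity)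
        nlinarith
      · push_neg at hn
        obtain ⟨k, rfl⟩ : ∃ k, n = k + 1 := ⟨n - 1, by omega⟩
        have hk : r ≤ k := by omega
        set t : ℤ := t0 + k with htdef
        have ht0 : t0 ≤ t := by omega
        have pc := hcpos t (by omega)
        have px := hxpos t (by omega)
        have pcr := hcpos (t - r) (by omega)
        have pxr := hxpos (t - r) (by omega)
        have pf : 0 < f (t - r) := lt_of_lt_of_le hm0 (hmle _ (by omega))
        have pg : 0 < g (t - r) := hgpos _ (by omega)
        have hcast : t0 + ((k+1:ℕ):ℤ) = t + 1 := by omega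
        have heq : c (t0 + ((k+1:ℕ):ℤ)) / x (t0 + ((k+1:ℕ):ℤ))
            = (c t + f (t-r) * c (t-r)) / (x t + g (t-r) * x (t-r)) := by
          rw [hcast, hc t ht0, hx t ht0, mul_div_mul_left _ _ (ne_of_gt hE')]
        rw [heq]
        rcases le_or_gt (c t * (g (t-r) * x (t-r))) (f (t-r) * c (t-r) * x t) with h1 | h1
        · -- case 1: bound by (f/g) * c(t-r)/x(t-r)
          have step : (c t + f (t-r) * c (t-r)) / (x t + g (t-r) * x (t-r))
              ≤ (f (t-r) * c (t-r)) / (g (t-r) * x (t-r)) :=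
            mediant_le pc.le (by positivity) px (by positivity) h1
          have ihr := ih (k - r) (by omega)
          have hcast2 : t0 + ((k - r:ℕ):ℤ) = t - r := by omega
          rw [hcast2] at ihr
          have hcast3 : ((k - r : ℕ):ℝ) = (k:ℝ) - r := by
            push_cast [Nat.cast_sub hk]; ring
          rw [hcast3] at ihr
          have step2 : (f (t-r) * c (t-r)) / (g (t-r) * x (t-r))
              = (f (t-r) / g (t-r)) * (c (t-r) / x (t-r)) := by
            rw [div_mul_div_comm]
          have step3 : (f (t-r) / g (t-r)) * (c (t-r) / x (t-r)) ≤ K * (c (t-r) / x (t-r)) :=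
            mul_le_mul_of_nonneg_right (hfK _ (by omega)) (by positivity)
          have step4 : K * (c (t-r) / x (t-r)) ≤ K * (K ^ (((k:ℝ)-r)/(r+1)) * M) :=
            mul_le_mul_of_nonneg_left ihr hK0.le
          have hre : K ^ (((k+1:ℕ):ℝ)/((r:ℝ)+1)) = K * (K ^ (((k:ℝ)-r)/(r+1))) := by
            rw [mul_comm, ← Real.rpow_add_one (ne_of_gt hK0)]
            congr 1
            push_cast
            field_simp
            ring
          rw [hre]
          calc (c t + f (t-r) * c (t-r)) / (x t + g (t-r) * x (t-r))
              ≤ (f (t-r) / g (t-r)) * (c (t-r) / x (t-r)) := by rw [← step2]; exact step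
            _ ≤ K * (c (t-r) / x (t-r)) := step3
            _ ≤ K * (K ^ (((k:ℝ)-r)/(r+1)) * M) := step4
            _ = K * K ^ (((k:ℝ)-r)/(r+1)) * M := by ring
        · -- case 2: bound by c t / x t
          have step : (c t + f (t-r) * c (t-r)) / (x t + g (t-r) * x (t-r)) ≤ c t / x t := by
            rw [add_comm (c t), add_comm (x t)]
            exact mediant_le (by positivity) pc.le (by positivity) px h1.le
          have ihk := ih k (by omega)
          have hmono : K ^ ((k:ℝ)/(r+1)) ≤ K ^ (((k+1:ℕ):ℝ)/(r+1)) := by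
            apply Real.rpow_le_rpow_of_exponent_le hK1
            apply div_le_div_of_nonneg_right ?_ hr1.le
            push_cast; linarith
          calc (c t + f (t-r) * c (t-r)) / (x t + g (t-r) * x (t-r))
              ≤ c t / x t := step
            _ ≤ K ^ ((k:ℝ)/(r+1)) * M := ihk
            _ ≤ K ^ (((k+1:ℕ):ℝ)/(r+1)) * M := mul_le_mul_of_nonneg_right hmono hM0.le
  intro t ht
  obtain ⟨n, rfl⟩ : ∃ n : ℕ, t = t0 + n := ⟨(t - t0).toNat, by omega⟩
  have hcast : ((t0 + (n:ℤ) : ℤ) : ℝ) - (t0:ℝ) = (n:ℝ) := by push_cast; ring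
  rw [hcast]
  exact key n
end

section
/- Let E ∈ (0,1) and define s⁰_t = E^{-1}(1-E)^{-2r-2} if 2^{2n} ≤ t < 2^{2n+1} for some n ∈ ℕ, and s⁰_t = E/2 otherwise. Let z_t = E ∑_{j=-∞}^{t-1} (1-E)^{t-1-j} s⁰_j. Then for every n large enough and every k with 3·2^{2n} ≤ k < 2^{2(n+1)}, one has z_k < E. In particular z_k ≤ E/2 + (1-E)^{2^{2n}} E^{-1}(1-E)^{-2r-2} on that range. -/
/-- the neither-nor example: with
`s⁰_t = E⁻¹(1-E)^{-2r-2}` on dyadic blocks `[2^{2n}, 2^{2n+1})` and `E/2` otherwise,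
and `z_t = E ∑_{j ≤ t-1} (1-E)^{t-1-j} s⁰_j`, for `n` large enough
(`(1-E)^{2^{2n}} E⁻¹(1-E)^{-2r-2} < E/2`) and `3·2^{2n} ≤ k < 2^{2(n+1)}`
one has `z_k < E`, and indeed
`z_k ≤ E/2 + (1-E)^{2^{2n}} E⁻¹(1-E)^{-2r-2}`. -/
theorem stmt19 (E : ℝ) (hE0 : 0 < E) (hE1 : E < 1) (r : ℕ)
    (s0 z : ℤ → ℝ)
    (hs1 : ∀ t : ℤ, (∃ n : ℕ, (2 ^ (2 * n) : ℤ) ≤ t ∧ t < 2 ^ (2 * n + 1)) →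
      s0 t = E⁻¹ * ((1 - E) ^ (2 * r + 2))⁻¹)
    (hs2 : ∀ t : ℤ, (¬ ∃ n : ℕ, (2 ^ (2 * n) : ℤ) ≤ t ∧ t < 2 ^ (2 * n + 1)) →
      s0 t = E / 2)
    (hz : ∀ t : ℤ, z t =
      E * ∑' j : {j : ℤ // j ≤ t - 1}, (1 - E) ^ ((t - 1 - j.1).toNat) * s0 j.1) :
    ∀ n : ℕ,
      (1 - E) ^ (2 ^ (2 * n)) * (E⁻¹ * ((1 - E) ^ (2 * r + 2))⁻¹) < E / 2 →
      ∀ k : ℤ, 3 * 2 ^ (2 * n) ≤ k → k < 2 ^ (2 * (n + 1)) →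
        z k < E ∧
        z k ≤ E / 2 + (1 - E) ^ (2 ^ (2 * n)) * (E⁻¹ * ((1 - E) ^ (2 * r + 2))⁻¹) := by
  intro n hn k hk1 hk2
  set u : ℝ := 1 - E with hu
  have hu0 : 0 < u := by simp [hu]; linarith
  have hu1 : u < 1 := by simp [hu]; linarith
  set M : ℝ := E⁻¹ * ((1 - E) ^ (2 * r + 2))⁻¹ with hM
  have hM1 : 1 ≤ M := by
    have h1 : 1 ≤ E⁻¹ := (one_le_inv₀ hE0).2 hE1.le
    have h2 : (1 - E) ^ (2 * r + 2) ≤ 1 := pow_le_one₀ (by linarith) (by linarith)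
    have h3 : 1 ≤ ((1 - E) ^ (2 * r + 2))⁻¹ :=
      (one_le_inv₀ (pow_pos (by linarith) _)).2 h2
    calc (1:ℝ) = 1 * 1 := by ring
    _ ≤ E⁻¹ * ((1 - E) ^ (2 * r + 2))⁻¹ := by
        apply mul_le_mul h1 h3 (by norm_num) (by positivity)
  have hs_nonneg : ∀ j : ℤ, 0 ≤ s0 j := by
    intro j
    by_cases h : ∃ m : ℕ, (2 ^ (2 * m) : ℤ) ≤ j ∧ j < 2 ^ (2 * m + 1)
    · rw [hs1 j h]; positivity
    · rw [hs2 j h]; linarith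
  have hs_le : ∀ j : ℤ, s0 j ≤ M := by
    intro j
    by_cases h : ∃ m : ℕ, (2 ^ (2 * m) : ℤ) ≤ j ∧ j < 2 ^ (2 * m + 1)
    · rw [hs1 j h]
    · rw [hs2 j h]; linarith
  -- reindex by ℕ
  let e : ℕ ≃ {j : ℤ // j ≤ k - 1} :=
    { toFun := fun i => ⟨k - 1 - i, by omega⟩
      invFun := fun j => (k - 1 - j.1).toNat
      left_inv := fun i => by simp
      right_inv := fun j => by
        ext
        have := j.2
        simp
        omega }
  have hzk : z k = E * ∑' i : ℕ, u ^ i * s0 (k - 1 - i) := by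
    rw [hz k]
    congr 1
    rw [← e.tsum_eq (fun j : {j : ℤ // j ≤ k - 1} => (1 - E) ^ ((k - 1 - j.1).toNat) * s0 j.1)]
    apply tsum_congr
    intro i
    have h1 : (k - 1 - (k - 1 - (i:ℤ))).toNat = i := by omega
    simp only [e, Equiv.coe_fn_mk, h1, hu]
  set f : ℕ → ℝ := fun i => u ^ i * s0 (k - 1 - i) with hf
  have hgsum : Summable (fun i : ℕ => M * u ^ i) :=
    (summable_geometric_of_lt_one hu0.le hu1).mul_left M
  have hf_nonneg : ∀ i, 0 ≤ f i := fun i =>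
    mul_nonneg (pow_nonneg hu0.le _) (hs_nonneg _)
  have hf_le : ∀ i, f i ≤ M * u ^ i := by
    intro i
    have := hs_le (k - 1 - i)
    calc f i ≤ u ^ i * M := by
          exact mul_le_mul_of_nonneg_left this (pow_nonneg hu0.le _)
    _ = M * u ^ i := by ring
  have hf_sum : Summable f := Summable.of_nonneg_of_le hf_nonneg hf_le hgsum
  -- block arithmetic
  have hP1 : (1:ℤ) ≤ 2 ^ (2 * n) := one_le_pow₀ one_le_two
  have hpow1 : (2:ℤ) ^ (2 * n + 1) = 2 * 2 ^ (2 * n) := by ring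
  have hpow2 : (2:ℤ) ^ (2 * (n + 1)) = 4 * 2 ^ (2 * n) := by ring
  set N : ℕ := (k - 2 ^ (2 * n + 1)).toNat with hN
  have hNk : (N : ℤ) = k - 2 * 2 ^ (2 * n) := by omega
  have hNge : 2 ^ (2 * n) ≤ N := by
    have : ((2:ℕ) ^ (2 * n) : ℤ) = (2:ℤ) ^ (2 * n) := by push_cast; ring
    omega
  -- s0 = E/2 on the recent block
  have hrecent : ∀ i : ℕ, i < N → s0 (k - 1 - i) = E / 2 := by
    intro i hi
    apply hs2
    rintro ⟨m, hm1, hm2⟩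
    have hj1 : 2 * 2 ^ (2 * n) ≤ k - 1 - (i:ℤ) := by omega
    have hj2 : k - 1 - (i:ℤ) < 4 * 2 ^ (2 * n) := by omega
    rcases le_or_gt m n with hmn | hmn
    · have : (2:ℤ) ^ (2 * m + 1) ≤ 2 ^ (2 * n + 1) :=
        pow_le_pow_right₀ (by norm_num) (by omega)
      omega
    · have : (2:ℤ) ^ (2 * (n + 1)) ≤ 2 ^ (2 * m) :=
        pow_le_pow_right₀ (by norm_num) (by omega)
      omega
  -- split the sum
  have hsplit : ∑' i : ℕ, f i = ∑ i ∈ Finset.range N, f i + ∑' i : ℕ, f (i + N) :=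
    (Summable.sum_add_tsum_nat_add N hf_sum).symm
  -- finite part bound
  have hEinv : ∑' i : ℕ, u ^ i = E⁻¹ := by
    rw [tsum_geometric_of_lt_one hu0.le hu1, hu]; ring_nf
  have hfin : ∑ i ∈ Finset.range N, f i ≤ E / 2 * E⁻¹ := by
    have h1 : ∑ i ∈ Finset.range N, f i = E / 2 * ∑ i ∈ Finset.range N, u ^ i := by
      rw [Finset.mul_sum]
      apply Finset.sum_congr rfl
      intro i hi
      rw [hf]
      simp only [hrecent i (Finset.mem_range.mp hi)]
      ring
    rw [h1]
    have h2 : ∑ i ∈ Finset.range N, u ^ i ≤ E⁻¹ := by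
      rw [← hEinv]
      exact Summable.sum_le_tsum _ (fun i _ => pow_nonneg hu0.le i)
        (summable_geometric_of_lt_one hu0.le hu1)
    exact mul_le_mul_of_nonneg_left h2 (by linarith)
  -- tail bound
  have htail : ∑' i : ℕ, f (i + N) ≤ u ^ N * M * E⁻¹ := by
    have h1 : ∀ i : ℕ, f (i + N) ≤ u ^ N * M * u ^ i := by
      intro i
      calc f (i + N) ≤ M * u ^ (i + N) := hf_le _
      _ = u ^ N * M * u ^ i := by rw [pow_add]; ring
    have h2 : Summable (fun i : ℕ => u ^ N * M * u ^ i) :=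
      (summable_geometric_of_lt_one hu0.le hu1).mul_left _
    calc ∑' i : ℕ, f (i + N) ≤ ∑' i : ℕ, u ^ N * M * u ^ i :=
          Summable.tsum_le_tsum h1 ((summable_nat_add_iff N).2 hf_sum) h2
    _ = u ^ N * M * E⁻¹ := by rw [tsum_mul_left, hEinv]
  -- combine
  have hzle : z k ≤ E / 2 + u ^ N * M := by
    rw [hzk]
    have hsum_le : ∑' i : ℕ, f i ≤ E / 2 * E⁻¹ + u ^ N * M * E⁻¹ := by
      rw [hsplit]; exact add_le_add hfin htail
    calc E * ∑' i : ℕ, f i ≤ E * (E / 2 * E⁻¹ + u ^ N * M * E⁻¹) :=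
          mul_le_mul_of_nonneg_left hsum_le hE0.le
    _ = E / 2 + u ^ N * M := by field_simp
  have hmono : u ^ N * M ≤ u ^ (2 ^ (2 * n)) * M := by
    apply mul_le_mul_of_nonneg_right _ (by linarith)
    exact pow_le_pow_of_le_one hu0.le hu1.le hNge
  have hfinal : z k ≤ E / 2 + u ^ (2 ^ (2 * n)) * M := by linarith
  constructor
  · calc z k ≤ E / 2 + u ^ (2 ^ (2 * n)) * M := hfinal
    _ < E / 2 + E / 2 := by
        have : u ^ (2 ^ (2 * n)) * M < E / 2 := hn
        linarith
    _ = E := by ring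
  · exact hfinal
end
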